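/- Let (p_n)_{n∈ℕ} be a sequence of complex polynomials and (k_n)_{n∈ℕ} a sequence of positive integers with k_n ≥ deg(p_n) for all n. Suppose that: (a) limsup_{n→∞} (1/k_n) · max_{|z| ≤ 1} log|p_n(z)| ≤ 0, and (b) there exists a compact subset S of { z ∈ ℂ : |z| > 1 } such that liminf_{n→∞} max_{z ∈ S} |p_n(z)|^{1/k_n} / |z| ≥ 1. Then for every compact subset K of { z ∈ ℂ : |z| > 1 }, (1/k_n)·#{ zeros w of p_n in K, counted with multiplicity } → 0 as n → ∞. -/

import Mathlib

open Filter Polynomial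
open scoped Classical Real

private lemma ms_prod_le_prod (s : Multiset ℂ) (f g : ℂ → ℝ)
    (h : ∀ w ∈ s, 0 ≤ f w ∧ f w ≤ g w) :
    (s.map f).prod ≤ (s.map g).prod := by
  induction s using Multiset.induction with
  | empty => simp
  | cons a s ih =>
    simp only [Multiset.map_cons, Multiset.prod_cons]
    have ha := h a (Multiset.mem_cons_self a s)
    have hs : ∀ w ∈ s, 0 ≤ f w ∧ f w ≤ g w := fun w hw => h w (Multiset.mem_cons_of_mem hw)
    have h1 : 0 ≤ (s.map f).prod := Multiset.prod_nonneg (by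
      intro x hx; obtain ⟨w, hw, rfl⟩ := Multiset.mem_map.1 hx; exact (hs w hw).1)
    have h2 : 0 ≤ g a := le_trans ha.1 ha.2
    exact mul_le_mul ha.2 (ih hs) h1 h2

private lemma norm_ms_prod (s : Multiset ℂ) : ‖s.prod‖ = (s.map (fun x => ‖x‖)).prod :=
  map_multiset_prod normHom s

private lemma reflect_eval {q : Polynomial ℂ} {k : ℕ} (hq : q.natDegree ≤ k) {z : ℂ}
    (hz : z ≠ 0) : (q.reflect k).eval z⁻¹ * z ^ k = q.eval z := by
  letI := invertibleOfNonzero hz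
  have h := Polynomial.eval₂_reflect_mul_pow (RingHom.id ℂ) z k q hq
  simpa [Polynomial.eval₂_id, invOf_eq_inv] using h

private lemma bw {q : Polynomial ℂ} {k : ℕ} (hq : q.natDegree ≤ k) {Mq : ℝ}
    (hM : ∀ u : ℂ, ‖u‖ = 1 → ‖q.eval u‖ ≤ Mq)
    {z : ℂ} (hz : 1 ≤ ‖z‖) :
    ‖q.eval z‖ ≤ Mq * ‖z‖ ^ k := by
  have hz0 : z ≠ 0 := by
    intro h; rw [h] at hz; simp at hz; linarith
  have hfr : ∀ u ∈ frontier (Metric.ball (0 : ℂ) 1),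
      ‖(q.reflect k).eval u‖ ≤ Mq := by
    intro u hu
    rw [frontier_ball (0 : ℂ) one_ne_zero] at hu
    have hu1 : ‖u‖ = 1 := by
      simpa [Complex.dist_eq] using hu
    have hu0 : u ≠ 0 := by
      intro h; rw [h] at hu1; simp at hu1
    have huinv : ‖u⁻¹‖ = 1 := by
      rw [norm_inv, hu1]; norm_num
    have h := reflect_eval hq (inv_ne_zero hu0)
    rw [inv_inv] at h
    have : ‖(q.reflect k).eval u‖ * ‖u⁻¹‖ ^ k
        = ‖q.eval u⁻¹‖ := by
      rw [← h, norm_mul, norm_pow]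
    rw [huinv, one_pow, mul_one] at this
    rw [this]
    exact hM u⁻¹ huinv
  have hmax : ∀ ζ ∈ Metric.closedBall (0 : ℂ) 1,
      ‖(q.reflect k).eval ζ‖ ≤ Mq := by
    intro ζ hζ
    have := Complex.norm_le_of_forall_mem_frontier_norm_le Metric.isBounded_ball
      ((q.reflect k).differentiable.diffContOnCl) hfr
      (by rwa [closure_ball (0 : ℂ) one_ne_zero])
    simpa using this
  have hinv : z⁻¹ ∈ Metric.closedBall (0 : ℂ) 1 := by
    simp only [Metric.mem_closedBall, Complex.dist_eq, sub_zero]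
    rw [norm_inv]
    exact inv_le_one_of_one_le₀ hz
  have h := reflect_eval hq hz0
  calc ‖q.eval z‖ = ‖(q.reflect k).eval z⁻¹‖ * ‖z‖ ^ k := by
        rw [← h, norm_mul, norm_pow]
    _ ≤ Mq * ‖z‖ ^ k := by
        have := hmax z⁻¹ hinv
        have hzk : (0:ℝ) ≤ ‖z‖ ^ k := by positivity
        exact mul_le_mul_of_nonneg_right this hzk


private lemma key {K : Set ℂ} (hK1 : K ⊆ {z : ℂ | 1 < ‖z‖}) (p : Polynomial ℂ)
    (k : ℕ) (hd : p.natDegree ≤ k) {M : ℝ}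
    (hM : ∀ u : ℂ, ‖u‖ ≤ 1 → ‖p.eval u‖ ≤ M)
    {z₀ : ℂ} (hz₀ : 1 < ‖z₀‖) {c : ℝ}
    (hc : ∀ w ∈ K, ‖z₀ - w‖ ≤ c * ‖z₀ * (starRingEnd ℂ) w - 1‖) :
    ‖p.eval z₀‖ ≤ M * ‖z₀‖ ^ k *
      c ^ (Multiset.card (p.roots.filter (fun w => w ∈ K))) := by
  have hM0 : 0 ≤ M := le_trans (by positivity) (hM 0 (by simp))
  by_cases hp : p = 0
  · subst hp; simp only [Polynomial.eval_zero, norm_zero, Polynomial.roots_zero,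
      Multiset.filter_zero, Multiset.card_zero, pow_zero, mul_one]
    positivity
  -- notation
  set ms : Multiset ℂ := p.roots.filter (fun w => w ∈ K) with hms
  set rest : Multiset ℂ := p.roots.filter (fun w => ¬ (w ∈ K)) with hrest
  have hsplit : ms + rest = p.roots := Multiset.filter_add_not _ _
  have hmsK : ∀ w ∈ ms, w ∈ K := fun w hw => (Multiset.mem_filter.1 hw).2
  have hmsabs : ∀ w ∈ ms, 1 < ‖w‖ := fun w hw => hK1 (hmsK w hw)
  -- the modified polynomial
  set q : Polynomial ℂ := Polynomial.C p.leadingCoeff *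
      ((rest.map (fun w => X - Polynomial.C w)).prod *
       (ms.map (fun w => X - Polynomial.C (((starRingEnd ℂ) w)⁻¹))).prod) with hq
  -- eval formulas
  have hqev : ∀ z : ℂ, ‖q.eval z‖ = ‖p.leadingCoeff‖ *
      ((rest.map (fun w => ‖z - w‖)).prod *
       (ms.map (fun w => ‖z - ((starRingEnd ℂ) w)⁻¹‖)).prod) := by
    intro z
    rw [hq]
    simp only [Polynomial.eval_mul, Polynomial.eval_C, Polynomial.eval_multiset_prod,
      Multiset.map_map, Function.comp, Polynomial.eval_sub, Polynomial.eval_X,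
      Polynomial.eval_C, norm_mul]
    rw [norm_ms_prod, norm_ms_prod, Multiset.map_map,
      Multiset.map_map]
    simp only [Function.comp_def]
  have hpev : ∀ z : ℂ, ‖p.eval z‖ = ‖p.leadingCoeff‖ *
      ((rest.map (fun w => ‖z - w‖)).prod *
       (ms.map (fun w => ‖z - w‖)).prod) := by
    intro z
    conv_lhs => rw [Polynomial.Splits.eq_prod_roots (IsAlgClosed.splits p)]
    rw [← hsplit]
    simp only [Multiset.map_add, Multiset.prod_add, Polynomial.eval_mul, Polynomial.eval_C,
      Polynomial.eval_multiset_prod, Multiset.map_map, Function.comp, Polynomial.eval_sub,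
      Polynomial.eval_X, norm_mul]
    rw [norm_ms_prod, norm_ms_prod, Multiset.map_map,
      Multiset.map_map]
    simp only [Function.comp_def]
    ring
  -- degree of q
  have hdegq : q.natDegree ≤ k := by
    have h1 : ((rest.map (fun w => X - Polynomial.C w)).prod).natDegree = Multiset.card rest :=
      Polynomial.natDegree_multiset_prod_X_sub_C_eq_card rest
    have h2 : ((ms.map (fun w => X - Polynomial.C (((starRingEnd ℂ) w)⁻¹))).prod).natDegree
        = Multiset.card ms := by
      have he : ms.map (fun w => X - Polynomial.C (((starRingEnd ℂ) w)⁻¹))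
          = (ms.map (fun w => ((starRingEnd ℂ) w)⁻¹)).map (fun a => X - Polynomial.C a) := by
        rw [Multiset.map_map]; rfl
      rw [he, Polynomial.natDegree_multiset_prod_X_sub_C_eq_card, Multiset.card_map]
    have hcard : Multiset.card ms + Multiset.card rest ≤ k := by
      have := congrArg Multiset.card hsplit
      rw [Multiset.card_add] at this
      rw [this]
      exact le_trans (Polynomial.card_roots' p) hd
    calc q.natDegree ≤ (Polynomial.C p.leadingCoeff).natDegree +
          ((rest.map (fun w => X - Polynomial.C w)).prod *
           (ms.map (fun w => X - Polynomial.C (((starRingEnd ℂ) w)⁻¹))).prod).natDegree :=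
        Polynomial.natDegree_mul_le
      _ ≤ 0 + (((rest.map (fun w => X - Polynomial.C w)).prod).natDegree +
          ((ms.map (fun w => X - Polynomial.C (((starRingEnd ℂ) w)⁻¹))).prod).natDegree) := by
        gcongr
        · exact le_of_eq (Polynomial.natDegree_C _)
        · exact Polynomial.natDegree_mul_le
      _ ≤ k := by rw [h1, h2, zero_add, add_comm]; exact hcard
  -- basic identity : |z * conj w - 1| = |w| * |z - (conj w)⁻¹|
  have hid : ∀ (z w : ℂ), w ≠ 0 →
      ‖z * (starRingEnd ℂ) w - 1‖
        = ‖w‖ * ‖z - ((starRingEnd ℂ) w)⁻¹‖ := by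
    intro z w hw
    have hcw : (starRingEnd ℂ) w ≠ 0 := by simpa using hw
    rw [← Complex.norm_conj w, ← norm_mul]
    congr 1
    field_simp
  -- reflection identity on the unit circle
  have hrefl : ∀ (u w : ℂ), ‖u‖ = 1 → w ≠ 0 →
      ‖u - ((starRingEnd ℂ) w)⁻¹‖ = ‖u - w‖ * (‖w‖)⁻¹ := by
    intro u w hu hw
    have hw0 : ‖w‖ ≠ 0 := by simpa using hw
    rw [eq_mul_inv_iff_mul_eq₀ hw0]
    have hnu : u * (starRingEnd ℂ) u = 1 := by
      rw [Complex.mul_conj, Complex.normSq_eq_norm_sq, hu]; norm_num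
    calc ‖u - ((starRingEnd ℂ) w)⁻¹‖ * ‖w‖
        = ‖u * (starRingEnd ℂ) w - 1‖ := by rw [hid u w hw]; ring
      _ = ‖(starRingEnd ℂ) (u * (starRingEnd ℂ) w - 1)‖ := (Complex.norm_conj _).symm
      _ = ‖(starRingEnd ℂ) u * (w - u)‖ := by
          congr 1
          rw [map_sub, map_mul, Complex.conj_conj, map_one, mul_sub]
          rw [mul_comm u ((starRingEnd ℂ) u)] at hnu
          rw [hnu]
      _ = ‖(starRingEnd ℂ) u‖ * ‖w - u‖ := norm_mul _ _
      _ = ‖u - w‖ := by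
          rw [Complex.norm_conj, hu, one_mul, norm_sub_rev]
  -- bound for q on the unit circle
  set B : ℝ := (ms.map (fun w => (‖w‖)⁻¹)).prod with hB
  have hB0 : 0 ≤ B := Multiset.prod_nonneg (by
    intro x hx; obtain ⟨w, hw, rfl⟩ := Multiset.mem_map.1 hx; positivity)
  have hw0' : ∀ w ∈ ms, w ≠ 0 := by
    intro w hw h0
    have := hmsabs w hw
    rw [h0] at this; simp at this; linarith
  have hsphere : ∀ u : ℂ, ‖u‖ = 1 → ‖q.eval u‖ ≤ M * B := by
    intro u hu
    have hWeq : ms.map (fun w => ‖u - ((starRingEnd ℂ) w)⁻¹‖)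
        = ms.map (fun w => ‖u - w‖ * (‖w‖)⁻¹) :=
      Multiset.map_congr rfl (fun w hw => hrefl u w hu (hw0' w hw))
    have hMu := hM u (le_of_eq hu)
    rw [hpev u] at hMu
    rw [hqev u, hWeq, Multiset.prod_map_mul]
    have h' := mul_le_mul_of_nonneg_right hMu hB0
    calc ‖p.leadingCoeff‖ *
          ((rest.map (fun w => ‖u - w‖)).prod *
            ((ms.map (fun w => ‖u - w‖)).prod * B))
        = ‖p.leadingCoeff‖ *
          ((rest.map (fun w => ‖u - w‖)).prod *
            (ms.map (fun w => ‖u - w‖)).prod) * B := by ring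
      _ ≤ M * B := h'
  -- Bernstein–Walsh bound for q at z₀
  have hqz : ‖q.eval z₀‖ ≤ (M * B) * ‖z₀‖ ^ k :=
    bw hdegq hsphere (le_of_lt hz₀)
  -- products at z₀
  set P : ℝ := (ms.map (fun w => ‖z₀ - ((starRingEnd ℂ) w)⁻¹‖)).prod with hP
  set Q : ℝ := (ms.map (fun w => ‖z₀ - w‖)).prod with hQ
  set W : ℝ := (ms.map (fun w => ‖w‖)).prod with hW
  have hPpos : 0 < P := Multiset.prod_pos (by
    intro x hx; obtain ⟨w, hw, rfl⟩ := Multiset.mem_map.1 hx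
    have hw1 := hmsabs w hw
    have : ‖((starRingEnd ℂ) w)⁻¹‖ < 1 := by
      rw [norm_inv, Complex.norm_conj]
      rw [inv_lt_one_iff₀]; right; exact hw1
    have hne : z₀ - ((starRingEnd ℂ) w)⁻¹ ≠ 0 := by
      intro h
      rw [sub_eq_zero] at h
      rw [← h] at this
      linarith
    exact norm_pos_iff.2 hne)
  have hQ0 : 0 ≤ Q := Multiset.prod_nonneg (by
    intro x hx; obtain ⟨w, hw, rfl⟩ := Multiset.mem_map.1 hx; positivity)
  have hE1 : ‖p.eval z₀‖ * P = ‖q.eval z₀‖ * Q := by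
    rw [hpev z₀, hqev z₀]; ring
  set m : ℕ := Multiset.card ms with hm
  have hQbound : Q ≤ c ^ m * (W * P) := by
    have hptwise : ∀ w ∈ ms, ‖z₀ - w‖
        ≤ c * (‖w‖ * ‖z₀ - ((starRingEnd ℂ) w)⁻¹‖) := by
      intro w hw
      have := hc w (hmsK w hw)
      rwa [hid z₀ w (hw0' w hw)] at this
    calc Q ≤ (ms.map (fun w => c * (‖w‖ *
            ‖z₀ - ((starRingEnd ℂ) w)⁻¹‖))).prod :=
          Multiset.prod_map_le_prod_map₀ _ _ (fun w _ => by positivity) hptwise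
      _ = c ^ m * (W * P) := by
          rw [Multiset.prod_map_mul, Multiset.prod_map_mul, Multiset.map_const',
            Multiset.prod_replicate]
  have hBW : B * W = 1 := by
    rw [hB, hW, ← Multiset.prod_map_mul]
    have : ms.map (fun w => (‖w‖)⁻¹ * ‖w‖) = ms.map (fun _ => 1) :=
      Multiset.map_congr rfl (fun w hw => inv_mul_cancel₀ (by
        have := hmsabs w hw; positivity))
    rw [this, Multiset.map_const', Multiset.prod_replicate, one_pow]
  -- combine
  have hfinal : ‖p.eval z₀‖ * P ≤ (M * ‖z₀‖ ^ k * c ^ m) * P := by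
    calc ‖p.eval z₀‖ * P = ‖q.eval z₀‖ * Q := hE1
      _ ≤ ((M * B) * ‖z₀‖ ^ k) * (c ^ m * (W * P)) := by
          apply mul_le_mul hqz hQbound hQ0
          positivity
      _ = (M * ‖z₀‖ ^ k * c ^ m) * P * (B * W) := by ring
      _ = (M * ‖z₀‖ ^ k * c ^ m) * P := by rw [hBW, mul_one]
  exact le_of_mul_le_mul_right hfinal hPpos


set_option maxHeartbeats 1000000 in
/-- Corollary 2.5, part (i): a Jentzsch–Szegö type theorem for the unit
disc. If `(p_n)` is a sequence of complex polynomials, `k_n ≥ max(deg p_n, 1)`, the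
`limsup` of `(1/k_n) max_{|z|≤1} log |p_n(z)|` is `≤ 0`, and there is a compact subset
`S` of `{|z| > 1}` with `liminf_n max_{z ∈ S} |p_n(z)|^{1/k_n}/|z| ≥ 1`, then for every
compact `K ⊆ {|z| > 1}` the fraction `(1/k_n) · #{zeros of p_n in K}` tends to `0`. -/
theorem stmt_3 (p : ℕ → Polynomial ℂ) (k : ℕ → ℕ) (hk : ∀ n, 1 ≤ k n)
    (hdeg : ∀ n, (p n).natDegree ≤ k n)
    (ha : Filter.limsup (fun n : ℕ =>
        (((1 / (k n : ℝ)) * Real.log (sSup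
          ((fun z : ℂ => ‖(p n).eval z‖) '' Metric.closedBall (0 : ℂ) 1))
          : ℝ) : EReal)) Filter.atTop ≤ 0)
    (hb : ∃ S : Set ℂ, IsCompact S ∧ S ⊆ {z : ℂ | 1 < ‖z‖} ∧
      (1 : EReal) ≤ Filter.liminf (fun n : ℕ =>
        ((sSup ((fun z : ℂ =>
            ‖(p n).eval z‖ ^ ((k n : ℝ)⁻¹) / ‖z‖) '' S) : ℝ)
          : EReal)) Filter.atTop) :
    ∀ K : Set ℂ, IsCompact K → K ⊆ {z : ℂ | 1 < ‖z‖} →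
      Filter.Tendsto (fun n : ℕ =>
          (1 / (k n : ℝ)) * (((p n).roots.filter fun w => w ∈ K).card : ℝ))
        Filter.atTop (nhds 0) := by
  intro K hKc hK1
  obtain ⟨S, hSc, hS1, hliminf⟩ := hb
  have hSne : S.Nonempty := by
    rcases Set.eq_empty_or_nonempty S with h | h
    · exfalso
      rw [h] at hliminf
      simp only [Set.image_empty, Real.sSup_empty, EReal.coe_zero, Filter.liminf_const]
        at hliminf
      exact absurd hliminf (by norm_num)
    · exact h
  have hex : ∃ c₀ : ℝ, 0 < c₀ ∧ c₀ < 1 ∧ ∀ z ∈ S, ∀ w ∈ K,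
      ‖z - w‖ ≤ c₀ * ‖z * (starRingEnd ℂ) w - 1‖ := by
    rcases Set.eq_empty_or_nonempty K with hKe | hKne
    · refine ⟨1/2, by norm_num, by norm_num, ?_⟩
      intro z hz w hw
      rw [hKe] at hw
      exact absurd hw (Set.notMem_empty w)
  -- max of the Green-type factor on S ×ˢ K
    have hTc : IsCompact (S ×ˢ K) := hSc.prod hKc
    have hTne : (S ×ˢ K).Nonempty := hSne.prod hKne
    set f : ℂ × ℂ → ℝ := fun zw =>
      ‖zw.1 - zw.2‖ / ‖zw.1 * (starRingEnd ℂ) zw.2 - 1‖ with hf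
    have hden : ∀ zw : ℂ × ℂ, zw ∈ S ×ˢ K →
        0 < ‖zw.1 * (starRingEnd ℂ) zw.2 - 1‖ := by
      intro zw hzw
      rw [Set.mem_prod] at hzw
      have hz := hS1 hzw.1
      have hw := hK1 hzw.2
      simp only [Set.mem_setOf_eq] at hz hw
      have h1 : 1 < ‖zw.1 * (starRingEnd ℂ) zw.2‖ := by
        rw [norm_mul, Complex.norm_conj]
        nlinarith
      have hne : zw.1 * (starRingEnd ℂ) zw.2 - 1 ≠ 0 := by
        intro h
        rw [sub_eq_zero] at h
        rw [h] at h1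
        simp at h1
      exact norm_pos_iff.2 hne
    have hfc : ContinuousOn f (S ×ˢ K) := by
      apply ContinuousOn.div
      · exact (continuous_norm.comp (continuous_fst.sub continuous_snd)).continuousOn
      · exact (continuous_norm.comp
          ((continuous_fst.mul (Complex.continuous_conj.comp continuous_snd)).sub
            continuous_const)).continuousOn
      · exact fun x hx => ne_of_gt (hden x hx)
    obtain ⟨x, hxT, hxmax⟩ := hTc.exists_isMaxOn hTne hfc
    set c : ℝ := f x with hcdef
    have hclt : c < 1 := by
      have hd := hden x hxT
      rw [hcdef, hf]
      simp only
      rw [div_lt_one hd]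
      rw [Set.mem_prod] at hxT
      have hax : 1 < ‖x.1‖ := hS1 hxT.1
      have hbx : 1 < ‖x.2‖ := hK1 hxT.2
      have hsq : ‖x.1 - x.2‖ ^ 2 +
          (‖x.1‖ ^ 2 - 1) * (‖x.2‖ ^ 2 - 1)
          = ‖x.1 * (starRingEnd ℂ) x.2 - 1‖ ^ 2 := by
        simp only [Complex.sq_norm, Complex.normSq_apply, Complex.sub_re, Complex.sub_im,
          Complex.mul_re, Complex.mul_im, Complex.one_re, Complex.one_im, Complex.conj_re,
          Complex.conj_im]
        ring
      have hpos2 : 0 < (‖x.1‖ ^ 2 - 1) * (‖x.2‖ ^ 2 - 1) :=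
        mul_pos (by nlinarith) (by nlinarith)
      have hlt : ‖x.1 - x.2‖ ^ 2
          < ‖x.1 * (starRingEnd ℂ) x.2 - 1‖ ^ 2 := by linarith
      exact lt_of_pow_lt_pow_left₀ 2 (norm_nonneg _) hlt
    set c₀ : ℝ := max c (1/2) with hc₀def
    have hc₀pos : (0:ℝ) < c₀ := lt_of_lt_of_le one_half_pos (le_max_right _ _)
    have hc₀lt : c₀ < 1 := max_lt hclt (by norm_num)
    have hcK : ∀ z ∈ S, ∀ w ∈ K,
        ‖z - w‖ ≤ c₀ * ‖z * (starRingEnd ℂ) w - 1‖ := by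
      intro z hz w hw
      have hmem : (z, w) ∈ S ×ˢ K := Set.mk_mem_prod hz hw
      have h1 := hxmax hmem
      simp only [Set.mem_setOf_eq] at h1
      have h2 := hden (z, w) hmem
      dsimp only at h1 h2
      rw [div_le_iff₀ h2] at h1
      calc ‖z - w‖ ≤ c * ‖z * (starRingEnd ℂ) w - 1‖ := h1
        _ ≤ c₀ * ‖z * (starRingEnd ℂ) w - 1‖ :=
          mul_le_mul_of_nonneg_right (le_max_left _ _) h2.le
    exact ⟨c₀, hc₀pos, hc₀lt, hcK⟩
  obtain ⟨c₀, hc₀pos, hc₀lt, hcK⟩ := hex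
  set L : ℝ := - Real.log c₀ with hLdef
  have hL : 0 < L := by
    have := Real.log_neg hc₀pos hc₀lt
    rw [hLdef]
    linarith
  refine tendsto_order.2 ⟨?_, ?_⟩
  · intro b hb'
    filter_upwards with n
    have h0 : (0:ℝ) ≤ (1 / (k n : ℝ)) *
        (((p n).roots.filter fun w => w ∈ K).card : ℝ) := by positivity
    linarith
  · intro δ hδ
    set ε : ℝ := 1 - Real.exp (-(δ * L / 4)) with hεdef
    have h1ε : 1 - ε = Real.exp (-(δ * L / 4)) := by rw [hεdef]; ring
    have hexp : Real.exp (-(δ * L / 4)) < 1 := by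
      rw [Real.exp_lt_one_iff]
      nlinarith
    have hεpos : 0 < ε := by rw [hεdef]; linarith
    have h1εpos : 0 < 1 - ε := by rw [h1ε]; exact Real.exp_pos _
    have hev1 : ∀ᶠ n in atTop, ((1 - ε : ℝ) : EReal) < ((sSup ((fun z : ℂ =>
        ‖(p n).eval z‖ ^ ((k n : ℝ)⁻¹) / ‖z‖) '' S) : ℝ) : EReal) := by
      refine Filter.eventually_lt_of_lt_liminf (lt_of_lt_of_le ?_ hliminf)
      have h1' : ((1 - ε : ℝ) : EReal) < ((1 : ℝ) : EReal) := EReal.coe_lt_coe_iff.2 (by linarith)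
      rwa [EReal.coe_one] at h1'
    have hev2 : ∀ᶠ n in atTop, (((1 / (k n : ℝ)) * Real.log (sSup
        ((fun z : ℂ => ‖(p n).eval z‖) '' Metric.closedBall (0 : ℂ) 1))
        : ℝ) : EReal) < ((δ * L / 4 : ℝ) : EReal) := by
      refine Filter.eventually_lt_of_limsup_lt (lt_of_le_of_lt ha ?_)
      have h0' : ((0 : ℝ) : EReal) < ((δ * L / 4 : ℝ) : EReal) :=
        EReal.coe_lt_coe_iff.2 (by positivity)
      rwa [EReal.coe_zero] at h0'
    filter_upwards [hev1, hev2] with n h1 h2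
    rw [EReal.coe_lt_coe_iff] at h1 h2
    set M : ℝ := sSup ((fun z : ℂ => ‖(p n).eval z‖) ''
      Metric.closedBall (0 : ℂ) 1) with hMdef
    obtain ⟨y, hy, hylt⟩ := exists_lt_of_lt_csSup (hSne.image _) h1
    obtain ⟨z, hzS, rfl⟩ := hy
    have hz1 : 1 < ‖z‖ := hS1 hzS
    have hkpos : (0:ℝ) < (k n : ℝ) := by exact_mod_cast hk n
    have hkne : (k n : ℝ) ≠ 0 := ne_of_gt hkpos
    -- lower bound at z
    have hlow : ((1 - ε) * ‖z‖) ^ (k n) < ‖(p n).eval z‖ := by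
      have h3 : (1 - ε) * ‖z‖
          < ‖(p n).eval z‖ ^ ((k n : ℝ)⁻¹) := by
        rw [lt_div_iff₀ (by positivity)] at hylt
        exact hylt
      have h4 := pow_lt_pow_left₀ h3 (by positivity) (Nat.one_le_iff_ne_zero.1 (hk n))
      have h5 : (‖(p n).eval z‖ ^ ((k n : ℝ)⁻¹)) ^ (k n)
          = ‖(p n).eval z‖ := by
        rw [← Real.rpow_natCast (‖(p n).eval z‖ ^ ((k n : ℝ)⁻¹)) (k n),
          ← Real.rpow_mul (norm_nonneg _), inv_mul_cancel₀ hkne, Real.rpow_one]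
      rwa [h5] at h4
    -- upper bound via the key inequality
    have hbdd : BddAbove ((fun z : ℂ => ‖(p n).eval z‖) ''
        Metric.closedBall (0 : ℂ) 1) :=
      ((isCompact_closedBall _ _).image
        (continuous_norm.comp (p n).continuous)).bddAbove
    have hMb : ∀ u : ℂ, ‖u‖ ≤ 1 → ‖(p n).eval u‖ ≤ M := by
      intro u hu
      refine le_csSup hbdd ⟨u, ?_, rfl⟩
      simpa [Complex.dist_eq] using hu
    set m : ℕ := Multiset.card ((p n).roots.filter (fun w => w ∈ K)) with hmdef
    have hkey : ‖(p n).eval z‖ ≤ M * ‖z‖ ^ (k n) * c₀ ^ m :=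
      key hK1 (p n) (k n) (hdeg n) hMb hz1 (hcK z hzS)
    have hzk : (0:ℝ) < ‖z‖ ^ (k n) := by positivity
    have hchain : (1 - ε) ^ (k n) * ‖z‖ ^ (k n)
        < (M * c₀ ^ m) * ‖z‖ ^ (k n) := by
      rw [← mul_pow]
      calc ((1 - ε) * ‖z‖) ^ (k n) < ‖(p n).eval z‖ := hlow
        _ ≤ M * ‖z‖ ^ (k n) * c₀ ^ m := hkey
        _ = (M * c₀ ^ m) * ‖z‖ ^ (k n) := by ring
    have hMc : (1 - ε) ^ (k n) < M * c₀ ^ m := lt_of_mul_lt_mul_right hchain hzk.le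
    have hMpos : 0 < M := by
      nlinarith [pow_pos hc₀pos m, pow_pos h1εpos (k n)]
    have hlog := Real.log_lt_log (pow_pos h1εpos (k n)) hMc
    rw [Real.log_pow, Real.log_mul (ne_of_gt hMpos) (ne_of_gt (pow_pos hc₀pos m)),
      Real.log_pow] at hlog
    have hlog1ε : Real.log (1 - ε) = -(δ * L / 4) := by rw [h1ε, Real.log_exp]
    rw [hlog1ε] at hlog
    have hlogc₀ : Real.log c₀ = -L := by rw [hLdef]; ring
    rw [hlogc₀] at hlog
    have hlogM : Real.log M < (k n : ℝ) * (δ * L / 4) := by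
      have h6 := mul_lt_mul_of_pos_left h2 hkpos
      calc Real.log M = (k n : ℝ) * ((1 / (k n : ℝ)) * Real.log M) := by field_simp
        _ < (k n : ℝ) * (δ * L / 4) := h6
    have hmL : (m : ℝ) * L < ((k n : ℝ) * (δ / 2)) * L := by
      have e1 : ((k n : ℝ) * (δ / 2)) * L = (k n : ℝ) * (δ * L / 4) + (k n : ℝ) * (δ * L / 4) := by ring
      have e2 : (k n : ℝ) * -(δ * L / 4) = -((k n : ℝ) * (δ * L / 4)) := by ring
      rw [e2] at hlog
      have e3 : (m : ℝ) * -L = -((m : ℝ) * L) := by ring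
      rw [e3] at hlog
      linarith
    have hm2 : (m : ℝ) < (k n : ℝ) * (δ / 2) := lt_of_mul_lt_mul_right hmL (le_of_lt hL)
    show (1 / (k n : ℝ)) * (m : ℝ) < δ
    rw [one_div, inv_mul_lt_iff₀ hkpos]
    have := mul_pos hkpos hδ
    nlinarith
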